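/- There exist constants c ∈ (0,1) and C ≥ 1 such that for every ν ∈ (0,1] there is a function M : [0,∞) × ℤ × ℝ → ℝ, differentiable in its first and third arguments, satisfying: (1) M(0,k,ξ) = 1 and M(t,0,ξ) = 1 for all t, k, ξ; (2) c ≤ M(t,k,ξ) ≤ 1 for all t, k, ξ; (3) for all k ≠ 0, −∂ₜM(t,k,ξ)/M(t,k,ξ) ≥ |k|/(k² + (ξ − kt)²); (4) for all k ≠ 0, |∂_ξ M(t,k,ξ)| ≤ (C/|k|)·M(t,k,ξ); (5) for all k ≠ 0 and all t, η, 1 ≤ C·ν^{−1/6}·( √(−∂ₜM(t,k,η)·M(t,k,η)) + ν^{1/2}·√(k² + (η − kt)²) ); (6) for all k ≠ 0 and all t, η, ξ, √(−∂ₜM(t,k,η)·M(t,k,η)) ≤ C·√(1 + (η − ξ)²)·√(−∂ₜM(t,k,ξ)·M(t,k,ξ)). -/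

import Mathlib

open Real

noncomputable def ghostE (b t : ℝ) (k : ℤ) (ξ : ℝ) : ℝ :=
  (arctan (t - ξ/(k:ℝ)) + arctan (ξ/(k:ℝ)))/|(k:ℝ)| +
    arctan (b*(t - ξ/(k:ℝ))) + arctan (b*(ξ/(k:ℝ)))

noncomputable def ghostG (b t : ℝ) (k : ℤ) (ξ : ℝ) : ℝ :=
  (1/(1+(t - ξ/(k:ℝ))^2))/|(k:ℝ)| + b/(1+(b*(t - ξ/(k:ℝ)))^2)

noncomputable def ghostM (b t : ℝ) (k : ℤ) (ξ : ℝ) : ℝ :=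
  if k = 0 then 1 else Real.exp (-(ghostE b t k ξ))

lemma abs_k_ge (k : ℤ) (hk : k ≠ 0) : (1:ℝ) ≤ |(k:ℝ)| := by
  rw [← Int.cast_abs]; exact_mod_cast Int.one_le_abs hk

lemma ghostE_nonneg {b : ℝ} (hb : 0 ≤ b) {t : ℝ} (ht : 0 ≤ t) (k : ℤ) (ξ : ℝ) :
    0 ≤ ghostE b t k ξ := by
  unfold ghostE
  have h1 : arctan (-(ξ/(k:ℝ))) ≤ arctan (t - ξ/(k:ℝ)) :=
    Real.arctan_strictMono.monotone (by linarith)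
  rw [Real.arctan_neg] at h1
  have h2 : arctan (-(b*(ξ/(k:ℝ)))) ≤ arctan (b*(t - ξ/(k:ℝ)))  :=
    Real.arctan_strictMono.monotone (by nlinarith)
  rw [Real.arctan_neg] at h2
  have h3 : 0 ≤ (arctan (t - ξ/(k:ℝ)) + arctan (ξ/(k:ℝ)))/|(k:ℝ)| :=
    div_nonneg (by linarith) (abs_nonneg _)
  linarith

lemma ghostE_le (b t : ℝ) (k : ℤ) (hk : k ≠ 0) (ξ : ℝ) : ghostE b t k ξ ≤ 2*π := by
  have hK := abs_k_ge k hk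
  have hKpos : (0:ℝ) < |(k:ℝ)| := by linarith
  unfold ghostE
  have a1 := Real.arctan_lt_pi_div_two (t - ξ/(k:ℝ))
  have a2 := Real.arctan_lt_pi_div_two (ξ/(k:ℝ))
  have a3 := Real.arctan_lt_pi_div_two (b*(t - ξ/(k:ℝ)))
  have a4 := Real.arctan_lt_pi_div_two (b*(ξ/(k:ℝ)))
  have hpi := Real.pi_pos
  have h1 : (arctan (t - ξ/(k:ℝ)) + arctan (ξ/(k:ℝ)))/|(k:ℝ)| ≤ π := by
    rw [div_le_iff₀ hKpos]; nlinarith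
  linarith

lemma ghostM_pos (b t : ℝ) (k : ℤ) (ξ : ℝ) : 0 < ghostM b t k ξ := by
  unfold ghostM; split
  · norm_num
  · exact Real.exp_pos _

lemma ghostM_le_one {b : ℝ} (hb : 0 ≤ b) {t : ℝ} (ht : 0 ≤ t) (k : ℤ) (ξ : ℝ) :
    ghostM b t k ξ ≤ 1 := by
  unfold ghostM; split
  · exact le_refl 1
  · exact Real.exp_le_one_iff.mpr (by simp only [neg_nonpos]; exact ghostE_nonneg hb ht k ξ)

lemma ghostM_ge (b t : ℝ) (k : ℤ) (ξ : ℝ) : Real.exp (-(2*π)) ≤ ghostM b t k ξ := by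
  unfold ghostM; split
  · exact (Real.exp_le_one_iff.mpr (by linarith [Real.pi_pos])).trans (le_refl 1)
  · exact Real.exp_le_exp.2 (neg_le_neg (ghostE_le b t k (by assumption) ξ))

lemma ghostM_hasDerivAt_t (b t : ℝ) (k : ℤ) (hk : k ≠ 0) (ξ : ℝ) :
    HasDerivAt (fun τ => ghostM b τ k ξ) (-(ghostG b t k ξ) * ghostM b t k ξ) t := by
  simp only [ghostM, if_neg hk]
  have h1 : HasDerivAt (fun τ : ℝ => τ - ξ/(k:ℝ)) 1 t := (hasDerivAt_id t).sub_const _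
  have h2 := h1.arctan
  have h3 := (h2.add_const (arctan (ξ/(k:ℝ)))).div_const |(k:ℝ)|
  have h4 := (h1.const_mul b).arctan
  have h5 := (h3.add h4).add_const (arctan (b*(ξ/(k:ℝ))))
  have h6 : HasDerivAt (fun τ => ghostE b τ k ξ)
      (1 / (1 + (t - ξ/(k:ℝ)) ^ 2) * 1 / |(k:ℝ)| +
        1 / (1 + (b*(t - ξ/(k:ℝ))) ^ 2) * (b * 1)) t := h5
  have h7 := h6.neg.exp
  simp only [Pi.neg_apply] at h7
  convert h7 using 1
  unfold ghostG
  ring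

lemma ghostM_deriv_t (b t : ℝ) (k : ℤ) (hk : k ≠ 0) (ξ : ℝ) :
    deriv (fun τ => ghostM b τ k ξ) t = -(ghostG b t k ξ) * ghostM b t k ξ :=
  (ghostM_hasDerivAt_t b t k hk ξ).deriv

lemma ghostM_hasDerivAt_xi (b t : ℝ) (k : ℤ) (hk : k ≠ 0) (ξ : ℝ) :
    HasDerivAt (fun x => ghostM b t k x)
      (-((1 / (1 + (t - ξ/(k:ℝ)) ^ 2) * -(1/(k:ℝ)) + 1 / (1 + (ξ/(k:ℝ)) ^ 2) * (1/(k:ℝ))) / |(k:ℝ)| +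
          (1 / (1 + (b*(t - ξ/(k:ℝ))) ^ 2) * (b * -(1/(k:ℝ))) +
           1 / (1 + (b*(ξ/(k:ℝ))) ^ 2) * (b * (1/(k:ℝ))))) * ghostM b t k ξ) ξ := by
  simp only [ghostM, if_neg hk]
  have h0 : HasDerivAt (fun x : ℝ => x/(k:ℝ)) (1/(k:ℝ)) ξ := by
    simpa using (hasDerivAt_id ξ).div_const (k:ℝ)
  have hA : HasDerivAt (fun x : ℝ => t - x/(k:ℝ)) (-(1/(k:ℝ))) ξ := h0.const_sub t
  have h2 := hA.arctan
  have h3 := (h2.add h0.arctan).div_const |(k:ℝ)|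
  have h4 := (hA.const_mul b).arctan
  have h5 := (h0.const_mul b).arctan
  have h6 : HasDerivAt (fun x => ghostE b t k x)
      ((1 / (1 + (t - ξ/(k:ℝ)) ^ 2) * -(1/(k:ℝ)) + 1 / (1 + (ξ/(k:ℝ)) ^ 2) * (1/(k:ℝ))) / |(k:ℝ)| +
        1 / (1 + (b*(t - ξ/(k:ℝ))) ^ 2) * (b * -(1/(k:ℝ))) +
        1 / (1 + (b*(ξ/(k:ℝ))) ^ 2) * (b * (1/(k:ℝ)))) ξ := (h3.add h4).add h5
  have h7 := h6.neg.exp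
  simp only [Pi.neg_apply] at h7
  convert h7 using 1
  ring

lemma ghostM_deriv_xi_bound {b : ℝ} (hb0 : 0 < b) (hb1 : b ≤ 1) (t : ℝ) (k : ℤ)
    (hk : k ≠ 0) (ξ : ℝ) :
    |deriv (fun x => ghostM b t k x) ξ| ≤ 4 / |(k:ℝ)| * ghostM b t k ξ := by
  have hK := abs_k_ge k hk
  have hKpos : (0:ℝ) < |(k:ℝ)| := by linarith
  rw [(ghostM_hasDerivAt_xi b t k hk ξ).deriv]
  have hMpos := ghostM_pos b t k ξ
  rw [abs_mul, abs_neg]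
  rw [abs_of_pos hMpos]
  set K := |(k:ℝ)| with hKdef
  set A1 := 1 / (1 + (t - ξ/(k:ℝ)) ^ 2) * -(1/(k:ℝ)) with hA1
  set A2 := 1 / (1 + (ξ/(k:ℝ)) ^ 2) * (1/(k:ℝ)) with hA2
  set A3 := 1 / (1 + (b*(t - ξ/(k:ℝ))) ^ 2) * (b * -(1/(k:ℝ))) with hA3
  set A4 := 1 / (1 + (b*(ξ/(k:ℝ))) ^ 2) * (b * (1/(k:ℝ))) with hA4
  have hfrac : ∀ x : ℝ, |1 / (1 + x ^ 2)| ≤ 1 := by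
    intro x
    rw [abs_of_nonneg (by positivity), div_le_one (by positivity)]
    nlinarith [sq_nonneg x]
  have hbound : ∀ (x c : ℝ), |1 / (1 + x ^ 2) * c| ≤ |c| := by
    intro x c
    rw [abs_mul]
    calc |1 / (1 + x ^ 2)| * |c| ≤ 1 * |c| :=
          mul_le_mul_of_nonneg_right (hfrac x) (abs_nonneg _)
      _ = |c| := one_mul _
  have hc1 : |(-(1/(k:ℝ)))| = 1/K := by rw [abs_neg, abs_div, abs_one, hKdef]
  have hc2 : |b * -(1/(k:ℝ))| ≤ 1/K := by
    rw [abs_mul, hc1, abs_of_pos hb0]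
    calc b * (1/K) ≤ 1 * (1/K) := mul_le_mul_of_nonneg_right hb1 (by positivity)
      _ = 1/K := one_mul _
  have hc3 : |b * (1/(k:ℝ))| ≤ 1/K := by
    rw [abs_mul, abs_div, abs_one, abs_of_pos hb0, ← hKdef]
    calc b * (1/K) ≤ 1 * (1/K) := mul_le_mul_of_nonneg_right hb1 (by positivity)
      _ = 1/K := one_mul _
  have e1 : |A1| ≤ 1/K := (hbound _ _).trans (le_of_eq hc1)
  have e2 : |A2| ≤ 1/K := (hbound _ _).trans (by rw [abs_div, abs_one, ← hKdef])
  have e3 : |A3| ≤ 1/K := (hbound _ _).trans hc2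
  have e4 : |A4| ≤ 1/K := (hbound _ _).trans hc3
  have hs : |A1 + A2| ≤ 2/K := (abs_add_le _ _).trans (by rw [show (2:ℝ)/K = 1/K + 1/K by ring]; exact add_le_add e1 e2)
  have ediv : |(A1 + A2)/K| ≤ 2/K := by
    rw [abs_div, hKdef, abs_abs, ← hKdef]
    exact (div_le_self (abs_nonneg _) hK).trans hs
  have habs : |(A1 + A2)/K + (A3 + A4)| ≤ 4/K := by
    have u1 := abs_add_le ((A1 + A2)/K) (A3 + A4)
    have u2 := abs_add_le A3 A4
    have : (2:ℝ)/K + (1/K + 1/K) = 4/K := by ring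
    linarith
  calc |(A1 + A2)/K + (A3 + A4)| * ghostM b t k ξ
      ≤ 4/K * ghostM b t k ξ := mul_le_mul_of_nonneg_right habs hMpos.le

lemma ghostG_nonneg {b : ℝ} (hb : 0 ≤ b) (t : ℝ) (k : ℤ) (ξ : ℝ) : 0 ≤ ghostG b t k ξ := by
  unfold ghostG; positivity

lemma ghostG_first (b t : ℝ) (k : ℤ) (hk : k ≠ 0) (ξ : ℝ) :
    (1/(1+(t - ξ/(k:ℝ))^2))/|(k:ℝ)| = |(k:ℝ)| / ((k:ℝ)^2 + (ξ - (k:ℝ)*t)^2) := by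
  have hk' : (k:ℝ) ≠ 0 := Int.cast_ne_zero.2 hk
  have habs : |(k:ℝ)| ≠ 0 := abs_ne_zero.2 hk'
  have key : ((k:ℝ))^2*(1+(t - ξ/(k:ℝ))^2) = (k:ℝ)^2+(ξ-(k:ℝ)*t)^2 := by
    field_simp; ring
  rw [div_div, div_eq_div_iff (by positivity) (by positivity), one_mul]
  calc (k:ℝ)^2+(ξ-(k:ℝ)*t)^2 = ((k:ℝ))^2*(1+(t - ξ/(k:ℝ))^2) := key.symm
    _ = (abs ((k:ℝ)) * abs ((k:ℝ)))*(1+(t - ξ/(k:ℝ))^2) := by rw [abs_mul_abs_self]; ring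
    _ = abs ((k:ℝ)) * ((1+(t - ξ/(k:ℝ))^2) * abs ((k:ℝ))) := by ring

lemma ghostG_ge_first (b t : ℝ) {k : ℤ} (hk : k ≠ 0) (hb : 0 ≤ b) (ξ : ℝ) :
    |(k:ℝ)| / ((k:ℝ)^2 + (ξ - (k:ℝ)*t)^2) ≤ ghostG b t k ξ := by
  rw [← ghostG_first b t k hk ξ]
  unfold ghostG
  have : 0 ≤ b/(1+(b*(t - ξ/(k:ℝ)))^2) := by positivity
  linarith

lemma ghostG_transfer {b : ℝ} (hb0 : 0 < b) (hb1 : b ≤ 1) (t : ℝ) (k : ℤ)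
    (hk : k ≠ 0) (η ξ : ℝ) :
    ghostG b t k η ≤ 2*(1+(η-ξ)^2) * ghostG b t k ξ := by
  have hK := abs_k_ge k hk
  have hKpos : (0:ℝ) < |(k:ℝ)| := by linarith
  have hk' : (k:ℝ) ≠ 0 := Int.cast_ne_zero.2 hk
  have hk2 : (1:ℝ) ≤ (k:ℝ)^2 := by nlinarith [sq_abs ((k:ℝ))]
  set u := t - η/(k:ℝ) with hu
  set v := t - ξ/(k:ℝ) with hv
  set d2 := (η-ξ)^2 with hd2
  have hd2n : 0 ≤ d2 := sq_nonneg _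
  have huv : (u - v)^2 ≤ d2 := by
    have h1 : u - v = (ξ-η)/(k:ℝ) := by rw [hu, hv]; ring
    rw [h1, div_pow]
    calc (ξ-η)^2/(k:ℝ)^2 ≤ (ξ-η)^2 := div_le_self (sq_nonneg _) hk2
      _ = d2 := by rw [hd2]; ring
  have hv2 : v^2 ≤ 2*u^2 + 2*d2 := by nlinarith [sq_nonneg (u + (u - v))]
  have term1 : (1/(1+u^2))/|(k:ℝ)| ≤ (2*(1+d2) * (1/(1+v^2)))/|(k:ℝ)| := by
    gcongr ?_ / _
    rw [mul_one_div, div_le_div_iff₀ (by positivity) (by positivity)]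
    nlinarith [sq_nonneg u, mul_nonneg hd2n (sq_nonneg u)]
  have hbu : (b*v)^2 ≤ 2*(b*u)^2 + 2*d2 := by
    have hb2 : b^2 ≤ 1 := by nlinarith
    have h2 : (b*(u-v))^2 ≤ d2 := by
      nlinarith [mul_le_mul_of_nonneg_right hb2 (sq_nonneg (u-v)), huv]
    nlinarith [sq_nonneg (b*u + b*(u - v))]
  have term2 : b/(1+(b*u)^2) ≤ 2*(1+d2) * (b/(1+(b*v)^2)) := by
    rw [mul_div_assoc' (2*(1+d2)) b _, div_le_div_iff₀ (by positivity) (by positivity)]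
    nlinarith [mul_nonneg hd2n (sq_nonneg (b*u)), hb0.le,
      mul_nonneg (mul_nonneg hd2n (sq_nonneg (b*u))) hb0.le,
      mul_nonneg hd2n hb0.le, mul_nonneg (mul_nonneg hb0.le hd2n) (sq_nonneg u)]
  show (1/(1+u^2))/|(k:ℝ)| + b/(1+(b*u)^2) ≤ 2*(1+d2) * ((1/(1+v^2))/|(k:ℝ)| + b/(1+(b*v)^2))
  calc (1/(1+u^2))/|(k:ℝ)| + b/(1+(b*u)^2)
      ≤ (2*(1+d2) * (1/(1+v^2)))/|(k:ℝ)| + 2*(1+d2) * (b/(1+(b*v)^2)) := add_le_add term1 term2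
    _ = 2*(1+d2) * ((1/(1+v^2))/|(k:ℝ)| + b/(1+(b*v)^2)) := by ring

lemma ghostE_zero (b : ℝ) (k : ℤ) (ξ : ℝ) : ghostE b 0 k ξ = 0 := by
  unfold ghostE
  rw [show (0:ℝ) - ξ/(k:ℝ) = -(ξ/(k:ℝ)) by ring, Real.arctan_neg,
    show b * -(ξ/(k:ℝ)) = -(b*(ξ/(k:ℝ))) by ring, Real.arctan_neg]
  ring


set_option maxHeartbeats 2000000 in

/-- Existence of the ghost-energy Fourier multiplier `M` satisfying conditions
(eq:M:cond:1)–(eq:M:cond:6), with constants `c ∈ (0,1)` and `C ≥ 1`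
independent of `ν ∈ (0,1]`. -/
theorem stmt_7 :
    ∃ c C : ℝ, c ∈ Set.Ioo (0:ℝ) 1 ∧ 1 ≤ C ∧
      ∀ ν : ℝ, ν ∈ Set.Ioc (0:ℝ) 1 →
        ∃ M : ℝ → ℤ → ℝ → ℝ,
          -- differentiable in the first and third arguments (on [0,∞))
          (∀ (t : ℝ), 0 ≤ t → ∀ (k : ℤ) (ξ : ℝ),
            DifferentiableAt ℝ (fun τ : ℝ => M τ k ξ) t ∧
            DifferentiableAt ℝ (fun x : ℝ => M t k x) ξ) ∧
          -- (1) normalization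
          (∀ (t : ℝ) (k : ℤ) (ξ : ℝ), M 0 k ξ = 1 ∧ M t 0 ξ = 1) ∧
          -- (2) uniform two-sided bounds
          (∀ (t : ℝ), 0 ≤ t → ∀ (k : ℤ) (ξ : ℝ), c ≤ M t k ξ ∧ M t k ξ ≤ 1) ∧
          -- (3) inviscid damping lower bound on −Ṁ/M
          (∀ (t : ℝ), 0 ≤ t → ∀ (k : ℤ), k ≠ 0 → ∀ ξ : ℝ,
            |(k : ℝ)| / ((k : ℝ) ^ 2 + (ξ - (k : ℝ) * t) ^ 2)
              ≤ -(deriv (fun τ : ℝ => M τ k ξ) t) / M t k ξ) ∧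
          -- (4) logarithmic ξ-derivative bound
          (∀ (t : ℝ), 0 ≤ t → ∀ (k : ℤ), k ≠ 0 → ∀ ξ : ℝ,
            |deriv (fun x : ℝ => M t k x) ξ| ≤ C / |(k : ℝ)| * M t k ξ) ∧
          -- (5) enhanced dissipation
          (∀ (t : ℝ), 0 ≤ t → ∀ (k : ℤ), k ≠ 0 → ∀ η : ℝ,
            1 ≤ C * ν ^ (-(1:ℝ)/6) *
              (Real.sqrt (-(deriv (fun τ : ℝ => M τ k η) t) * M t k η) +
                ν ^ ((1:ℝ)/2) * Real.sqrt ((k : ℝ) ^ 2 + (η - (k : ℝ) * t) ^ 2))) ∧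
          -- (6) frequency transfer for √(−Ṁ M)
          (∀ (t : ℝ), 0 ≤ t → ∀ (k : ℤ), k ≠ 0 → ∀ η ξ : ℝ,
            Real.sqrt (-(deriv (fun τ : ℝ => M τ k η) t) * M t k η)
              ≤ C * Real.sqrt (1 + (η - ξ) ^ 2) *
                  Real.sqrt (-(deriv (fun τ : ℝ => M τ k ξ) t) * M t k ξ)) := by
  have hπ := Real.pi_gt_three
  have hπ0 := Real.pi_pos
  have hexp4 := Real.add_one_le_exp (4*π)
  have hexp2 := Real.add_one_le_exp (2*π)
  have hC1 : (1:ℝ) ≤ Real.exp (4*π) := by linarith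
  refine ⟨Real.exp (-(2*π)), Real.exp (4*π),
    ⟨Real.exp_pos _, Real.exp_lt_one_iff.mpr (by linarith)⟩, hC1, ?_⟩
  intro ν hν
  obtain ⟨hν0, hν1⟩ := hν
  set b := ν ^ ((1:ℝ)/3) with hbdef
  have hb0 : 0 < b := Real.rpow_pos_of_pos hν0 _
  have hb1 : b ≤ 1 := Real.rpow_le_one hν0.le hν1 (by norm_num)
  have hsb : Real.sqrt b = ν ^ ((1:ℝ)/6) := by
    have h : (ν ^ ((1:ℝ)/6))^2 = b := by
      rw [← Real.rpow_natCast (ν ^ ((1:ℝ)/6)) 2, ← Real.rpow_mul hν0.le]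
      norm_num [hbdef]
    rw [← h, Real.sqrt_sq (Real.rpow_nonneg hν0.le _)]
  refine ⟨fun t k ξ => ghostM b t k ξ, ?_, ?_, ?_, ?_, ?_, ?_, ?_⟩
  · -- differentiability
    intro t ht k ξ
    by_cases hk : k = 0
    · subst hk
      constructor
      · have h : (fun τ : ℝ => ghostM b τ 0 ξ) = fun _ => (1:ℝ) := by
          funext τ; simp [ghostM]
        rw [h]; exact differentiableAt_const 1
      · have h : (fun x : ℝ => ghostM b t 0 x) = fun _ => (1:ℝ) := by
          funext x; simp [ghostM]
        rw [h]; exact differentiableAt_const 1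
    · exact ⟨(ghostM_hasDerivAt_t b t k hk ξ).differentiableAt,
        (ghostM_hasDerivAt_xi b t k hk ξ).differentiableAt⟩
  · -- normalization
    intro t k ξ
    constructor
    · by_cases hk : k = 0
      · simp [ghostM, hk]
      · simp [ghostM, if_neg hk, ghostE_zero]
    · simp [ghostM]
  · -- bounds
    intro t ht k ξ
    exact ⟨ghostM_ge b t k ξ, ghostM_le_one hb0.le ht k ξ⟩
  · -- (3)
    intro t ht k hk ξ
    rw [ghostM_deriv_t b t k hk ξ]
    have hM := ghostM_pos b t k ξ
    have h : -(-(ghostG b t k ξ) * ghostM b t k ξ) / ghostM b t k ξ = ghostG b t k ξ := by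
      field_simp
    rw [h]
    exact ghostG_ge_first b t hk hb0.le ξ
  · -- (4)
    intro t ht k hk ξ
    have hK := abs_k_ge k hk
    have h4C : (4:ℝ) ≤ Real.exp (4*π) := by linarith
    calc |deriv (fun x : ℝ => ghostM b t k x) ξ| ≤ 4 / |(k:ℝ)| * ghostM b t k ξ :=
          ghostM_deriv_xi_bound hb0 hb1 t k hk ξ
      _ ≤ Real.exp (4*π) / |(k:ℝ)| * ghostM b t k ξ := by
          apply mul_le_mul_of_nonneg_right _ (ghostM_pos b t k ξ).le
          apply div_le_div_of_nonneg_right h4C (by linarith)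
  · -- (5)
    intro t ht k hk η
    rw [ghostM_deriv_t b t k hk η,
      show -(-(ghostG b t k η) * ghostM b t k η) * ghostM b t k η
        = ghostG b t k η * (ghostM b t k η)^2 from by ring]
    set G := ghostG b t k η with hGdef
    set M := ghostM b t k η with hMdef
    have hGn : 0 ≤ G := ghostG_nonneg hb0.le t k η
    have hMge : Real.exp (-(2*π)) ≤ M := ghostM_ge b t k η
    set q := Real.exp (-(2*π)) with hqdef
    have hq : 0 < q := Real.exp_pos _
    by_cases hcase : b * |t - η/(k:ℝ)| ≤ 1
    · -- resonant case
      have h1 : (b*(t - η/(k:ℝ)))^2 ≤ 1 := by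
        have hx0 : 0 ≤ b*|t - η/(k:ℝ)| := mul_nonneg hb0.le (abs_nonneg _)
        have e : (b*(t - η/(k:ℝ)))^2 = (b*|t - η/(k:ℝ)|)^2 := by
          rw [mul_pow, mul_pow, sq_abs]
        rw [e]
        nlinarith
      have h2 : b/2 ≤ b/(1+(b*(t - η/(k:ℝ)))^2) := by
        rw [div_le_div_iff₀ (by norm_num) (by positivity)]
        nlinarith
      have hG : b/2 ≤ G := by
        rw [hGdef]
        unfold ghostG
        have : 0 ≤ (1/(1+(t - η/(k:ℝ))^2))/|(k:ℝ)| := by positivity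
        linarith
      have hM2 : q^2 ≤ M^2 := by nlinarith
      have hGM : b/2*q^2 ≤ G * M^2 := mul_le_mul hG hM2 (by positivity) hGn
      have h3 : b*(q/2)^2 ≤ G*M^2 := le_trans (by nlinarith) hGM
      have h4 : Real.sqrt (b*(q/2)^2) = Real.sqrt b * (q/2) := by
        rw [Real.sqrt_mul hb0.le, Real.sqrt_sq (by positivity)]
      have h5 : Real.sqrt b * (q/2) ≤ Real.sqrt (G*M^2) := h4 ▸ Real.sqrt_le_sqrt h3
      have hx : ν ^ (-(1:ℝ)/6) * ν^((1:ℝ)/6) = 1 := by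
        rw [← Real.rpow_add hν0]; norm_num
      have hexpq : Real.exp (4*π) * q = Real.exp (2*π) := by
        rw [hqdef, ← Real.exp_add]; ring_nf
      have hmain : 1 ≤ Real.exp (4*π) * ν^(-(1:ℝ)/6) * (Real.sqrt b * (q/2)) := by
        rw [hsb, show Real.exp (4*π) * ν^(-(1:ℝ)/6) * (ν^((1:ℝ)/6) * (q/2))
          = Real.exp (4*π) * q/2 * (ν^(-(1:ℝ)/6) * ν^((1:ℝ)/6)) from by ring, hx, mul_one]
        rw [show Real.exp (4*π) * q/2 = Real.exp (4*π) * q * (1/2) from by ring, hexpq]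
        linarith
      have hrest : 0 ≤ ν^((1:ℝ)/2) * Real.sqrt ((k:ℝ)^2 + (η - (k:ℝ)*t)^2) := by positivity
      have hfac : 0 ≤ Real.exp (4*π) * ν^(-(1:ℝ)/6) := by positivity
      calc (1:ℝ) ≤ Real.exp (4*π) * ν^(-(1:ℝ)/6) * (Real.sqrt b * (q/2)) := hmain
        _ ≤ Real.exp (4*π) * ν^(-(1:ℝ)/6) * (Real.sqrt (G*M^2)) :=
            mul_le_mul_of_nonneg_left h5 hfac
        _ ≤ Real.exp (4*π) * ν^(-(1:ℝ)/6) *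
              (Real.sqrt (G*M^2) + ν^((1:ℝ)/2) * Real.sqrt ((k:ℝ)^2 + (η - (k:ℝ)*t)^2)) := by
            apply mul_le_mul_of_nonneg_left _ hfac
            linarith
    · -- nonresonant case
      push_neg at hcase
      set u := t - η/(k:ℝ) with hu
      have hK := abs_k_ge k hk
      have hk' : (k:ℝ) ≠ 0 := Int.cast_ne_zero.2 hk
      have hk2 : (1:ℝ) ≤ (k:ℝ)^2 := by nlinarith [sq_abs ((k:ℝ))]
      have hku : (k:ℝ)*u = (k:ℝ)*t - η := by rw [hu]; field_simp
      have hsq2 : u^2 ≤ (k:ℝ)^2 + (η - (k:ℝ)*t)^2 := by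
        have : (η - (k:ℝ)*t)^2 = ((k:ℝ)*u)^2 := by rw [hku]; ring
        nlinarith [sq_nonneg u]
      have hS : |u| ≤ Real.sqrt ((k:ℝ)^2 + (η - (k:ℝ)*t)^2) := by
        rw [← Real.sqrt_sq_eq_abs]
        exact Real.sqrt_le_sqrt hsq2
      have hub : 1/b ≤ |u| := by
        rw [div_le_iff₀ hb0]; nlinarith [abs_nonneg u]
      have hinv : (1:ℝ)/b = ν^(-((1:ℝ)/3)) := by
        rw [one_div, hbdef, ← Real.rpow_neg hν0.le]
      have hprod : ν^(-(1:ℝ)/6) * (ν^((1:ℝ)/2) * ν^(-((1:ℝ)/3))) = 1 := by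
        rw [← Real.rpow_add hν0, ← Real.rpow_add hν0]; norm_num
      have hS2 : ν^(-((1:ℝ)/3)) ≤ Real.sqrt ((k:ℝ)^2 + (η - (k:ℝ)*t)^2) :=
        le_trans (hinv ▸ hub) hS
      calc (1:ℝ) = 1 * (ν^(-(1:ℝ)/6) * (ν^((1:ℝ)/2) * ν^(-((1:ℝ)/3)))) := by
            rw [hprod, mul_one]
        _ ≤ Real.exp (4*π) * (ν^(-(1:ℝ)/6) * (ν^((1:ℝ)/2) * ν^(-((1:ℝ)/3)))) :=
            mul_le_mul_of_nonneg_right hC1 (by positivity)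
        _ = Real.exp (4*π) * ν^(-(1:ℝ)/6) * (0 + ν^((1:ℝ)/2) * ν^(-((1:ℝ)/3))) := by ring
        _ ≤ Real.exp (4*π) * ν^(-(1:ℝ)/6) *
              (Real.sqrt (G*M^2) + ν^((1:ℝ)/2) * Real.sqrt ((k:ℝ)^2 + (η - (k:ℝ)*t)^2)) := by
            apply mul_le_mul_of_nonneg_left _ (by positivity)
            apply add_le_add (Real.sqrt_nonneg _)
            exact mul_le_mul_of_nonneg_left hS2 (by positivity)
  · -- (6)
    intro t ht k hk η ξ
    rw [ghostM_deriv_t b t k hk η, ghostM_deriv_t b t k hk ξ,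
      show -(-(ghostG b t k η) * ghostM b t k η) * ghostM b t k η
        = ghostG b t k η * (ghostM b t k η)^2 from by ring,
      show -(-(ghostG b t k ξ) * ghostM b t k ξ) * ghostM b t k ξ
        = ghostG b t k ξ * (ghostM b t k ξ)^2 from by ring]
    set Gη := ghostG b t k η
    set Gξ := ghostG b t k ξ
    set Mη := ghostM b t k η
    set Mξ := ghostM b t k ξ
    have hGηn : 0 ≤ Gη := ghostG_nonneg hb0.le t k η
    have hGξn : 0 ≤ Gξ := ghostG_nonneg hb0.le t k ξ
    have hMη1 : Mη ≤ 1 := ghostM_le_one hb0.le ht k η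
    have hMηp : 0 < Mη := ghostM_pos b t k η
    have hMξ : Real.exp (-(2*π)) ≤ Mξ := ghostM_ge b t k ξ
    have hM2 : Mη^2 ≤ 1 := by nlinarith
    have h1 : Gη*Mη^2 ≤ Gη := by nlinarith [mul_le_mul_of_nonneg_left hM2 hGηn]
    have h2 := ghostG_transfer hb0 hb1 t k hk η ξ
    have hq2 : Real.exp (-(4*π)) ≤ Mξ^2 := by
      rw [show Real.exp (-(4*π)) = Real.exp (-(2*π)) * Real.exp (-(2*π)) from by
        rw [← Real.exp_add]; ring_nf]
      nlinarith [Real.exp_pos (-(2*π))]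
    have hee : Real.exp (4*π) * Real.exp (-(4*π)) = 1 := by
      rw [← Real.exp_add]; simp
    have h4 : 1 ≤ Real.exp (4*π) * Mξ^2 := by nlinarith [Real.exp_pos (4*π)]
    have h5 : (2:ℝ) ≤ Real.exp (4*π) := by linarith
    have hX : 0 ≤ Gξ*Mξ^2 := mul_nonneg hGξn (sq_nonneg _)
    have key : Gη*Mη^2 ≤ (Real.exp (4*π))^2 * (1+(η-ξ)^2) * (Gξ*Mξ^2) := by
      have s1 : Gη*Mη^2 ≤ 2*(1+(η-ξ)^2)*Gξ := h1.trans h2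
      have s2 : Gξ ≤ Real.exp (4*π)*(Gξ*Mξ^2) := by nlinarith [Real.exp_pos (4*π)]
      have s3 : 2*(1+(η-ξ)^2)*Gξ ≤ 2*(1+(η-ξ)^2)*(Real.exp (4*π)*(Gξ*Mξ^2)) :=
        mul_le_mul_of_nonneg_left s2 (by positivity)
      have s4 : 2*(1+(η-ξ)^2)*(Real.exp (4*π)*(Gξ*Mξ^2))
          ≤ (Real.exp (4*π))^2 * (1+(η-ξ)^2) * (Gξ*Mξ^2) := by
        nlinarith [mul_nonneg (mul_nonneg (by positivity : (0:ℝ) ≤ 1+(η-ξ)^2) hX)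
          (Real.exp_pos (4*π)).le]
      linarith
    calc Real.sqrt (Gη*Mη^2)
        ≤ Real.sqrt ((Real.exp (4*π))^2 * (1+(η-ξ)^2) * (Gξ*Mξ^2)) := Real.sqrt_le_sqrt key
      _ = Real.exp (4*π) * Real.sqrt (1+(η-ξ)^2) * Real.sqrt (Gξ*Mξ^2) := by
          rw [Real.sqrt_mul (by positivity), Real.sqrt_mul (by positivity),
            Real.sqrt_sq (Real.exp_pos _).le]
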